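/- The assignments of Proposition 1 are mutually inverse: for a t-structure (X, Y) on a triangulated category D with heart H, the map sending a t-structure (X', Y') with X[1] ⊆ X' ⊆ X to (H ∩ X', H ∩ Y'), and the map sending a torsion pair (T, F) in H to (⟨T, X[1]⟩, ⟨Y, F⟩), are mutually inverse bijections between the set of such intermediate t-structures and the set of torsion pairs in H. -/

import Mathlib

open CategoryTheory Category Limits Pretriangulated

namespace Paper

variable {C : Type*} [Category C] [HasZeroObject C] [Preadditive C] [HasShift C ℤ]
  [∀ n : ℤ, (shiftFunctor C n).Additive] [Pretriangulated C]

/-- The shift of a class of objects: `S⟦n⟧` (closed under isomorphism). -/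
def shiftSet (S : Set C) (n : ℤ) : Set C := {X | ∃ A ∈ S, Nonempty (X ≅ A⟦n⟧)}

/-- `S[≤ n] = { S⟦i⟧ ∣ S ∈ S, i ≤ n }`. -/
def shiftsLe (S : Set C) (n : ℤ) : Set C := {X | ∃ A ∈ S, ∃ i : ℤ, i ≤ n ∧ Nonempty (X ≅ A⟦i⟧)}

/-- `S[≥ n] = { S⟦i⟧ ∣ S ∈ S, i ≥ n }`. -/
def shiftsGe (S : Set C) (n : ℤ) : Set C := {X | ∃ A ∈ S, ∃ i : ℤ, n ≤ i ∧ Nonempty (X ≅ A⟦i⟧)}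

/-- `X * Y`: objects `D` fitting in a distinguished triangle `X → D → Y → X⟦1⟧`. -/
def star (X Y : Set C) : Set C :=
  {D | ∃ (A B : C) (f : A ⟶ D) (g : D ⟶ B) (h : B ⟶ A⟦(1 : ℤ)⟧),
    A ∈ X ∧ B ∈ Y ∧ Triangle.mk f g h ∈ distTriang C}

/-- Right perpendicular class. -/
def rightPerp (S : Set C) : Set C := {D | ∀ A ∈ S, ∀ f : A ⟶ D, f = 0}

/-- Left perpendicular class. -/
def leftPerp (S : Set C) : Set C := {D | ∀ B ∈ S, ∀ f : D ⟶ B, f = 0}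

/-- A t-structure `(X, Y)` on a (pre)triangulated category. -/
structure IsTStructure (X Y : Set C) : Prop where
  rp : rightPerp X = Y
  lp : leftPerp Y = X
  dec : ∀ D : C, D ∈ star X Y
  shift : shiftSet X 1 ⊆ X

/-- The heart `H = X ∩ Y⟦1⟧` of a t-structure. -/
def heart (X Y : Set C) : Set C := X ∩ shiftSet Y 1

/-- The extension closure of a class of objects. -/
inductive ExtClosure (S : Set C) : C → Prop
  | of {A : C} (h : A ∈ S) : ExtClosure S A
  | iso {A B : C} (e : A ≅ B) (h : ExtClosure S A) : ExtClosure S B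
  | ext {A E B : C} (f : A ⟶ E) (g : E ⟶ B) (h : B ⟶ A⟦(1 : ℤ)⟧)
      (hT : Triangle.mk f g h ∈ distTriang C)
      (hA : ExtClosure S A) (hB : ExtClosure S B) : ExtClosure S E

/-- The extension closure, as a set. -/
def extClosure (S : Set C) : Set C := {X | ExtClosure S X}

/-- A torsion pair `(T, F)` in the heart of a t-structure `(X, Y)`; short exact sequences in
the heart correspond to distinguished triangles with three terms in the heart. -/
structure IsHeartTorsionPair (X Y T F : Set C) : Prop where
  subT : T ⊆ heart X Y
  subF : F ⊆ heart X Y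
  rp : heart X Y ∩ rightPerp T = F
  lp : heart X Y ∩ leftPerp F = T
  dec : ∀ H₀ ∈ heart X Y, H₀ ∈ star T F

/-- A bounded t-structure. -/
def IsBounded (X Y : Set C) : Prop :=
  (∀ D : C, ∃ n : ℤ, D ∈ shiftSet X n) ∧ (∀ D : C, ∃ n : ℤ, D ∈ shiftSet Y n)

/-- A simple object of the heart of a t-structure: a nonzero object admitting no proper
subobjects in the heart (expressed via distinguished triangles with entries in the heart). -/
def IsSimpleInHeart (X Y : Set C) (A : C) : Prop :=
  A ∈ heart X Y ∧ ¬ IsZero A ∧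
  ∀ (A' B : C) (f : A' ⟶ A) (g : A ⟶ B) (h : B ⟶ A'⟦(1 : ℤ)⟧),
    Triangle.mk f g h ∈ (distTriang C) → A' ∈ heart X Y → B ∈ heart X Y →
    IsZero A' ∨ IsZero B

/-- An algebraic t-structure: a bounded t-structure whose heart is a length category with
finitely many simple objects, i.e. the heart is the extension closure of finitely many
simple objects. -/
def IsAlgebraic (X Y : Set C) : Prop :=
  IsTStructure X Y ∧ IsBounded X Y ∧
  ∃ (t : ℕ) (G : Fin t → C), (∀ i, IsSimpleInHeart X Y (G i)) ∧
    heart X Y = extClosure (Set.range G)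

/-- Thick closure: the smallest triangulated subcategory closed under direct summands. -/
inductive ThickClosure (S : Set C) : C → Prop
  | of {A : C} (h : A ∈ S) : ThickClosure S A
  | iso {A B : C} (e : A ≅ B) (h : ThickClosure S A) : ThickClosure S B
  | shift {A : C} (n : ℤ) (h : ThickClosure S A) : ThickClosure S (A⟦n⟧)
  | ext {A E B : C} (f : A ⟶ E) (g : E ⟶ B) (h : B ⟶ A⟦(1 : ℤ)⟧)
      (hT : Triangle.mk f g h ∈ distTriang C)
      (hA : ThickClosure S A) (hB : ThickClosure S B) : ThickClosure S E
  | retract {A B : C} (s : A ⟶ B) (r : B ⟶ A) (hsr : s ≫ r = 𝟙 A)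
      (h : ThickClosure S B) : ThickClosure S A

/-- Thick closure, as a set. -/
def thickClosure (S : Set C) : Set C := {X | ThickClosure S X}

/-- `Hom(S, T⟦i⟧) = 0` for all `i > 0`. -/
def vanishHomPos (S T : Set C) : Prop :=
  ∀ A ∈ S, ∀ B ∈ T, ∀ i : ℤ, 0 < i → ∀ f : A ⟶ B⟦i⟧, f = 0

/-- A silting subcategory `S` of the (thick) subcategory `P`. -/
def IsSiltingIn (P S : Set C) : Prop :=
  S ⊆ P ∧ thickClosure S = P ∧ vanishHomPos S S

/-- The aisle `X_S = (S[≤ 0])^⊥` of the t-structure associated to a silting subcategory. -/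
def siltXs (S : Set C) : Set C := rightPerp (shiftsLe S 0)

/-- The coaisle `Y_S = (S[≥ 0])^⊥` of the t-structure associated to a silting subcategory. -/
def siltYs (S : Set C) : Set C := rightPerp (shiftsGe S 0)

/-- A class of objects closed under isomorphisms, finite direct sums and direct summands. -/
def IsAddClosed [HasBinaryBiproducts C] (S : Set C) : Prop :=
  (∀ A B : C, (A ≅ B) → A ∈ S → B ∈ S) ∧
  (∀ A B : C, A ∈ S → B ∈ S → (A ⊞ B) ∈ S) ∧
  (∀ A B : C, (∃ (s : A ⟶ B) (r : B ⟶ A), s ≫ r = 𝟙 A) → B ∈ S → A ∈ S)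

/-- Silting-discreteness (relative to the subcategory `P` of compact objects, e.g.
`K^b(proj Λ)`): for every silting subcategory `S` of `P` there are only finitely many silting
subcategories `T` with `S ≥ T ≥ S⟦1⟧`. -/
def IsSiltingDiscrete [HasBinaryBiproducts C] (P : Set C) : Prop :=
  ∀ S : Set C, IsSiltingIn P S → IsAddClosed S →
    {T : Set C | IsSiltingIn P T ∧ IsAddClosed T ∧
      vanishHomPos S T ∧ vanishHomPos T (shiftSet S 1)}.Finite

/-- A t-structure on a full (pre)triangulated subcategory `B` of the ambient category. -/
structure IsTStructureOn (B X Y : Set C) : Prop where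
  subX : X ⊆ B
  subY : Y ⊆ B
  rp : B ∩ rightPerp X = Y
  lp : B ∩ leftPerp Y = X
  dec : ∀ D ∈ B, D ∈ star X Y
  shift : shiftSet X 1 ⊆ X

section Aux

variable {X Y : Set C}

lemma mem_shiftSet_one {S : Set C} {A : C} (hA : A ∈ S) : A⟦(1 : ℤ)⟧ ∈ shiftSet S 1 :=
  ⟨A, hA, ⟨Iso.refl _⟩⟩

lemma rightPerp_ext2 {P : Set C} (T : Triangle C) (hT : T ∈ distTriang C)
    (h1 : T.obj₁ ∈ rightPerp P) (h3 : T.obj₃ ∈ rightPerp P) : T.obj₂ ∈ rightPerp P := by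
  intro s hs φ
  have hφ : φ ≫ T.mor₂ = 0 := h3 s hs _
  obtain ⟨ψ, hψ⟩ := T.coyoneda_exact₂ hT φ hφ
  rw [hψ, h1 s hs ψ, zero_comp]

lemma leftPerp_ext2 {P : Set C} (T : Triangle C) (hT : T ∈ distTriang C)
    (h1 : T.obj₁ ∈ leftPerp P) (h3 : T.obj₃ ∈ leftPerp P) : T.obj₂ ∈ leftPerp P := by
  intro s hs φ
  have hφ : T.mor₁ ≫ φ = 0 := h1 s hs _
  obtain ⟨ψ, hψ⟩ := T.yoneda_exact₂ hT φ hφ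
  rw [hψ, h3 s hs ψ, comp_zero]

lemma extClosure_subset_rightPerp {S P : Set C} (h : S ⊆ rightPerp P) :
    extClosure S ⊆ rightPerp P := by
  intro A hA
  induction hA with
  | of h' => exact h h'
  | iso e _ ih =>
    intro s hs φ
    have h0 : φ ≫ e.inv = 0 := ih s hs _
    calc φ = (φ ≫ e.inv) ≫ e.hom := by simp
    _ = 0 := by rw [h0, zero_comp]
  | ext f g w hT _ _ ihA ihB => exact rightPerp_ext2 _ hT ihA ihB

lemma extClosure_subset_leftPerp {S P : Set C} (h : S ⊆ leftPerp P) :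
    extClosure S ⊆ leftPerp P := by
  intro A hA
  induction hA with
  | of h' => exact h h'
  | iso e _ ih =>
    intro s hs φ
    have h0 : e.hom ≫ φ = 0 := ih s hs _
    calc φ = e.inv ≫ e.hom ≫ φ := by simp
    _ = 0 := by rw [h0, comp_zero]
  | ext f g w hT _ _ ihA ihB => exact leftPerp_ext2 _ hT ihA ihB

lemma hom_zero_of_mem (h : IsTStructure X Y) {a y : C} (ha : a ∈ X) (hy : y ∈ Y)
    (f : a ⟶ y) : f = 0 := by
  rw [← h.rp] at hy
  exact hy a ha f

lemma shift_neg_mem_Y (h : IsTStructure X Y) {y : C} (hy : y ∈ Y) : y⟦(-1 : ℤ)⟧ ∈ Y := by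
  rw [← h.rp]
  intro A hA f
  have h1 : f⟦(1 : ℤ)⟧' ≫ (shiftNegShift y (1 : ℤ)).hom = 0 :=
    hom_zero_of_mem h (h.shift (mem_shiftSet_one hA)) hy _
  have h2 : f⟦(1 : ℤ)⟧' = 0 := by
    rw [← comp_id (f⟦(1 : ℤ)⟧'), ← (shiftNegShift y (1 : ℤ)).hom_inv_id, ← assoc, h1, zero_comp]
  exact (shiftFunctor C (1 : ℤ)).map_injective (by rw [h2, Functor.map_zero])

lemma mem_Y_shift_of_rightPerp (h : IsTStructure X Y) {D : C}
    (hD : D ∈ rightPerp (shiftSet X 1)) : D ∈ shiftSet Y 1 := by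
  have hmem : D⟦(-1 : ℤ)⟧ ∈ Y := by
    rw [← h.rp]
    intro x hx f
    have h1 : f⟦(1 : ℤ)⟧' ≫ (shiftNegShift D (1 : ℤ)).hom = 0 :=
      hD _ (mem_shiftSet_one hx) _
    have h2 : f⟦(1 : ℤ)⟧' = 0 := by
      rw [← comp_id (f⟦(1 : ℤ)⟧'), ← (shiftNegShift D (1 : ℤ)).hom_inv_id, ← assoc, h1, zero_comp]
    exact (shiftFunctor C (1 : ℤ)).map_injective (by rw [h2, Functor.map_zero])
  exact ⟨_, hmem, ⟨(shiftNegShift D (1 : ℤ)).symm⟩⟩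

lemma hom_shift_zero (h : IsTStructure X Y) {A B : C} (hA : A ∈ shiftSet X 1)
    (hB : B ∈ shiftSet Y 1) (f : A ⟶ B) : f = 0 := by
  obtain ⟨a, ha, ⟨e⟩⟩ := hA
  obtain ⟨y, hy, ⟨e'⟩⟩ := hB
  obtain ⟨g, hg⟩ := (shiftFunctor C (1 : ℤ)).map_surjective (e.inv ≫ f ≫ e'.hom)
  have hg0 : g = 0 := hom_zero_of_mem h ha hy g
  have hz : e.inv ≫ f ≫ e'.hom = 0 := by rw [← hg, hg0, Functor.map_zero]
  calc f = e.hom ≫ (e.inv ≫ f ≫ e'.hom) ≫ e'.inv := by simp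
  _ = 0 := by rw [hz, zero_comp, comp_zero]

lemma star_iso {S T : Set C} {D D' : C} (e : D ≅ D') (hD : D ∈ star S T) : D' ∈ star S T := by
  obtain ⟨A, B, f, g, w, hA, hB, hT⟩ := hD
  refine ⟨A, B, f ≫ e.hom, e.inv ≫ g, w, hA, hB, ?_⟩
  exact isomorphic_distinguished _ hT _
    (Triangle.isoMk _ _ (Iso.refl A) e.symm (Iso.refl B)
      (by exact (assoc _ _ _).trans ((congrArg (f ≫ ·) e.hom_inv_id).trans ((comp_id f).trans (id_comp f).symm)))
      (by exact comp_id _)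
      (by exact (congrArg (w ≫ ·) (CategoryTheory.Functor.map_id _ A)).trans ((comp_id w).trans (id_comp w).symm)))

lemma dec_shift (h : IsTStructure X Y) (D : C) :
    D ∈ star (shiftSet X 1) (shiftSet Y 1) := by
  obtain ⟨a, b, f, g, w, ha, hb, hT⟩ := h.dec (D⟦(-1 : ℤ)⟧)
  have hT' := Triangle.shift_distinguished _ hT 1
  rw [Triangle.shiftFunctor_eq] at hT'
  have hmem : D⟦(-1 : ℤ)⟧⟦(1 : ℤ)⟧ ∈ star (shiftSet X 1) (shiftSet Y 1) :=
    ⟨a⟦(1 : ℤ)⟧, b⟦(1 : ℤ)⟧, ((Triangle.shiftFunctor C 1).obj (Triangle.mk f g w)).mor₁,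
      ((Triangle.shiftFunctor C 1).obj (Triangle.mk f g w)).mor₂,
      ((Triangle.shiftFunctor C 1).obj (Triangle.mk f g w)).mor₃,
      mem_shiftSet_one ha, mem_shiftSet_one hb, hT'⟩
  exact star_iso (shiftNegShift D (1 : ℤ)) hmem

end Aux

/-- The assignments of Proposition 1 (HRS-tilting) are mutually inverse:
starting from an intermediate t-structure `(X', Y')`, tilting at the torsion pair
`(H ∩ X', H ∩ Y')` recovers `(X', Y')`; starting from a torsion pair `(T, F)` in the heart,
intersecting the tilted t-structure with the heart recovers `(T, F)`. -/
theorem statement2 (X Y : Set C) (h : IsTStructure X Y) :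
    (∀ X' Y' : Set C, IsTStructure X' Y' → shiftSet X 1 ⊆ X' → X' ⊆ X →
      extClosure ((heart X Y ∩ X') ∪ shiftSet X 1) = X' ∧
      extClosure (Y ∪ (heart X Y ∩ Y')) = Y') ∧
    (∀ T F : Set C, IsHeartTorsionPair X Y T F →
      heart X Y ∩ extClosure (T ∪ shiftSet X 1) = T ∧
      heart X Y ∩ extClosure (Y ∪ F) = F) := by
  constructor
  · intro X' Y' h' hX1 hX'X
    have hYY' : Y ⊆ Y' := by
      rw [← h.rp, ← h'.rp]
      exact fun D hD A hA f => hD A (hX'X hA) f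
    constructor
    · apply Set.Subset.antisymm
      · have hbase : (heart X Y ∩ X') ∪ shiftSet X 1 ⊆ leftPerp Y' := by
          rw [h'.lp]
          rintro A (hA | hA)
          exacts [hA.2, hX1 hA]
        intro A hA
        rw [← h'.lp]
        exact extClosure_subset_leftPerp hbase hA
      · intro D hD
        obtain ⟨A, B, f, g, w, hA, hB, hT⟩ := dec_shift h D
        have hA1 : A⟦(1 : ℤ)⟧ ∈ X' := hX1 (mem_shiftSet_one (hX'X (hX1 hA)))
        have hD' : D ∈ leftPerp Y' := by rw [h'.lp]; exact hD
        have hA1' : A⟦(1 : ℤ)⟧ ∈ leftPerp Y' := by rw [h'.lp]; exact hA1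
        have hBX' : B ∈ X' := by
          rw [← h'.lp]
          exact leftPerp_ext2 (Triangle.mk f g w).rotate (rot_of_distTriang _ hT) hD' hA1'
        have hBH : B ∈ heart X Y := ⟨hX'X hBX', hB⟩
        exact ExtClosure.ext f g w hT (ExtClosure.of (Or.inr hA))
          (ExtClosure.of (Or.inl ⟨hBH, hBX'⟩))
    · apply Set.Subset.antisymm
      · have hbase : Y ∪ (heart X Y ∩ Y') ⊆ rightPerp X' := by
          rw [h'.rp]
          rintro A (hA | hA)
          exacts [hYY' hA, hA.2]
        intro A hA
        rw [← h'.rp]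
        exact extClosure_subset_rightPerp hbase hA
      · intro D hD
        obtain ⟨a, b, f, g, w, ha, hb, hT⟩ := h.dec D
        have hb' : b⟦(-1 : ℤ)⟧ ∈ Y := shift_neg_mem_Y h hb
        have hY_rpX' : Y ⊆ rightPerp X' := by
          rw [← h.rp]
          exact fun y hy A hA f => hy A (hX'X hA) f
        have haY' : a ∈ Y' := by
          rw [← h'.rp]
          exact rightPerp_ext2 (Triangle.mk f g w).invRotate (inv_rot_of_distTriang _ hT)
            (hY_rpX' hb') (by rw [h'.rp]; exact hD)
        have hY_rp1 : Y ⊆ rightPerp (shiftSet X 1) :=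
          fun y hy A hA f => hom_zero_of_mem h (h.shift hA) hy f
        have hY'_rp1 : Y' ⊆ rightPerp (shiftSet X 1) := by
          rw [← h'.rp]
          exact fun E hE A hA f => hE A (hX1 hA) f
        have ha1 : a ∈ rightPerp (shiftSet X 1) :=
          rightPerp_ext2 (Triangle.mk f g w).invRotate (inv_rot_of_distTriang _ hT)
            (hY_rp1 hb') (hY'_rp1 hD)
        have haH : a ∈ heart X Y := ⟨ha, mem_Y_shift_of_rightPerp h ha1⟩
        exact ExtClosure.ext f g w hT (ExtClosure.of (Or.inr ⟨haH, haY'⟩))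
          (ExtClosure.of (Or.inl hb))
  · intro T F tp
    constructor
    · apply Set.Subset.antisymm
      · rintro E ⟨hEH, hE⟩
        rw [← tp.lp]
        refine ⟨hEH, ?_⟩
        have hbase : T ∪ shiftSet X 1 ⊆ leftPerp F := by
          rintro A (hA | hA)
          · rw [← tp.lp] at hA
            exact hA.2
          · intro f₀ hf₀ φ
            exact hom_shift_zero h hA (tp.subF hf₀).2 φ
        exact extClosure_subset_leftPerp hbase hE
      · intro t ht
        exact ⟨tp.subT ht, ExtClosure.of (Or.inl ht)⟩
    · apply Set.Subset.antisymm
      · rintro E ⟨hEH, hE⟩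
        rw [← tp.rp]
        refine ⟨hEH, ?_⟩
        have hbase : Y ∪ F ⊆ rightPerp T := by
          rintro A (hA | hA)
          · intro t ht φ
            exact hom_zero_of_mem h (tp.subT ht).1 hA φ
          · rw [← tp.rp] at hA
            exact hA.2
        exact extClosure_subset_rightPerp hbase hE
      · intro f₀ hf₀
        exact ⟨tp.subF hf₀, ExtClosure.of (Or.inr hf₀)⟩

end Paper
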